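/- arXiv:1704.01110 — 2 statements merged into one kernel-verified Lean document; each statement's English description precedes it below -/
import Mathlib

section
/- Let U be a 2-dimensional complex vector space and ε a nonzero element of Λ²U*. Then the real vector space H of Hermitian elements of U ⊗ conj(U) is 4-dimensional, and the symmetric real bilinear form g on H characterized by g(u⊗conj(u), v⊗conj(v)) = ε(u,v)·conj(ε)(conj(u),conj(v)) for all u, v ∈ U is well defined and has Lorentzian signature (1,3). -/
open Matrix

noncomputable section

/-- The 2-spinor space `U`, modelled as `ℂ²` via a basis. -/
abbrev U2 := Fin 2 → ℂ

/-- `U ⊗ conj(U)` modelled as 2×2 complex matrices. -/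
abbrev M2 := Matrix (Fin 2) (Fin 2) ℂ

/-- A complex symplectic form on `U`: any nonzero element of `Λ²U*` is
`ε_c(u,v) = c·(u⁰v¹ − u¹v⁰)` for some `c ≠ 0`. -/
def epsBil (c : ℂ) (u v : U2) : ℂ := c * (u 0 * v 1 - u 1 * v 0)

/-- The decomposable Hermitian tensor `u ⊗ conj(u)`. -/
def outerH (u : U2) : M2 := fun A B => u A * star (u B)

/-- Hermitian elements of `U ⊗ conj(U)`. -/
def IsHerm (M : M2) : Prop := Mᴴ = M

/-- The metric: `g(M,N) = |c|²·(tr M · tr N − tr(MN))`. -/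
def gdef (c : ℂ) (M N : M2) : ℂ :=
  (c * star c) * (M.trace * N.trace - (M * N).trace)

lemma gdef_add_left (c : ℂ) (M N P : M2) :
    gdef c (M + N) P = gdef c M P + gdef c N P := by
  simp [gdef, Matrix.add_mul]; ring

lemma gdef_add_right (c : ℂ) (M N P : M2) :
    gdef c M (N + P) = gdef c M N + gdef c M P := by
  simp [gdef, Matrix.mul_add]; ring

lemma gdef_smul_left (c : ℂ) (t : ℝ) (M N : M2) :
    gdef c (t • M) N = t • gdef c M N := by
  simp [gdef, smul_mul_assoc, Complex.real_smul]; ring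

lemma gdef_smul_right (c : ℂ) (t : ℝ) (M N : M2) :
    gdef c M (t • N) = t • gdef c M N := by
  simp [gdef, mul_smul_comm, Complex.real_smul]; ring

lemma gdef_outer (c : ℂ) (u v : U2) :
    gdef c (outerH u) (outerH v) = epsBil c u v * star (epsBil c u v) := by
  simp [gdef, epsBil, outerH, Matrix.trace_fin_two, Matrix.mul_apply,
    Fin.sum_univ_two, star_sub, star_mul']
  ring

lemma herm_decomp (M : M2) (hM : IsHerm M) : ∃ a b x y : ℝ,
    M = a • outerH ![1,0] + b • outerH ![0,1] + x • outerH ![1,1]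
      + y • outerH ![1,Complex.I] := by
  have h00 : star (M 0 0) = M 0 0 := by
    conv_rhs => rw [← hM]
    simp [Matrix.conjTranspose_apply, Complex.star_def]
  have h11 : star (M 1 1) = M 1 1 := by
    conv_rhs => rw [← hM]
    simp [Matrix.conjTranspose_apply, Complex.star_def]
  have h10 : M 1 0 = star (M 0 1) := by
    conv_lhs => rw [← hM]
    simp [Matrix.conjTranspose_apply, Complex.star_def]
  have him00 : (M 0 0).im = 0 := by
    have := congrArg Complex.im h00; simp at this; linarith
  have him11 : (M 1 1).im = 0 := by
    have := congrArg Complex.im h11; simp at this; linarith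
  set x := (M 0 1).re with hx
  set y := -(M 0 1).im with hy
  refine ⟨(M 0 0).re - x - y, (M 1 1).re - x - y, x, y, ?_⟩
  ext i j
  fin_cases i <;> fin_cases j <;>
    simp [outerH, Matrix.add_apply, Matrix.smul_apply, h10, Complex.ext_iff,
      Complex.real_smul, him00, him11, hx, hy] <;> ring

/-- The (scaled) Pauli basis of the Hermitian matrices. -/
def sig : Fin 4 → M2 :=
  ![!![1,0;0,1], !![0,1;1,0], !![0,-Complex.I;Complex.I,0], !![1,0;0,-1]]

def bb (c : ℂ) : Fin 4 → M2 := fun i => (Real.sqrt 2 * ‖c‖)⁻¹ • sig i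

lemma bb_herm (c : ℂ) (i : Fin 4) : IsHerm (bb c i) := by
  fin_cases i <;>
  · show _ᴴ = _
    ext a b
    fin_cases a <;> fin_cases b <;>
      simp [bb, sig, Matrix.conjTranspose_apply, Complex.real_smul]

lemma bb_indep (c : ℂ) (hc : c ≠ 0) : LinearIndependent ℝ (bb c) := by
  rw [Fintype.linearIndependent_iff]
  intro t ht i
  have e := fun a b => congrFun (congrFun ht a) b
  have e00 := e 0 0
  have e01 := e 0 1
  have e11 := e 1 1
  simp [bb, sig, Fin.sum_univ_four, Matrix.add_apply, Matrix.smul_apply,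
    Complex.real_smul, Complex.ext_iff] at e00 e01 e11
  have hcc : ¬(c.re = 0 ∧ c.im = 0) := by
    intro h; exact hc (Complex.ext h.1 h.2)
  have t1 := e01.1.resolve_right hcc
  have t2 := e01.2.resolve_right hcc
  have habs : (0:ℝ) < ‖c‖ := by simpa using hc
  have hs : (0:ℝ) < (‖c‖)⁻¹ * (Real.sqrt 2 / 2) := by positivity
  have h0 : t 0 * ((‖c‖)⁻¹ * (Real.sqrt 2 / 2)) = 0 := by linarith
  have h3 : t 3 * ((‖c‖)⁻¹ * (Real.sqrt 2 / 2)) = 0 := by linarith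
  have t0 : t 0 = 0 := by
    rcases mul_eq_zero.mp h0 with h | h
    · exact h
    · linarith
  have t3 : t 3 = 0 := by
    rcases mul_eq_zero.mp h3 with h | h
    · exact h
    · linarith
  fin_cases i <;> assumption

lemma bb_span (c : ℂ) (hc : c ≠ 0) (M : M2) (hM : IsHerm M) :
    M ∈ Submodule.span ℝ (Set.range (bb c)) := by
  have habs : (0:ℝ) < ‖c‖ := by simpa using hc
  have hsig : ∀ i, sig i ∈ Submodule.span ℝ (Set.range (bb c)) := by
    intro i
    have hmem : bb c i ∈ Submodule.span ℝ (Set.range (bb c)) :=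
      Submodule.subset_span ⟨i, rfl⟩
    have hsm := Submodule.smul_mem _ (Real.sqrt 2 * ‖c‖) hmem
    have heq : (Real.sqrt 2 * ‖c‖) • bb c i = sig i := by
      rw [bb, smul_smul]
      rw [mul_inv_cancel₀ (by positivity), one_smul]
    rwa [heq] at hsm
  have h00 : star (M 0 0) = M 0 0 := by
    conv_rhs => rw [← hM]
    simp [Matrix.conjTranspose_apply, Complex.star_def]
  have h11 : star (M 1 1) = M 1 1 := by
    conv_rhs => rw [← hM]
    simp [Matrix.conjTranspose_apply, Complex.star_def]
  have h10 : M 1 0 = star (M 0 1) := by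
    conv_lhs => rw [← hM]
    simp [Matrix.conjTranspose_apply, Complex.star_def]
  have him00 : (M 0 0).im = 0 := by
    have := congrArg Complex.im h00; simp at this; linarith
  have him11 : (M 1 1).im = 0 := by
    have := congrArg Complex.im h11; simp at this; linarith
  have hdec : M = (((M 0 0).re + (M 1 1).re)/2) • sig 0 + (M 0 1).re • sig 1
      + (-(M 0 1).im) • sig 2 + (((M 0 0).re - (M 1 1).re)/2) • sig 3 := by
    ext a b
    fin_cases a <;> fin_cases b <;>
      simp [sig, Matrix.add_apply, Matrix.smul_apply, h10, Complex.real_smul,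
        Complex.ext_iff, him00, him11] <;> ring
  rw [hdec]
  exact Submodule.add_mem _ (Submodule.add_mem _ (Submodule.add_mem _
    (Submodule.smul_mem _ _ (hsig 0)) (Submodule.smul_mem _ _ (hsig 1)))
    (Submodule.smul_mem _ _ (hsig 2))) (Submodule.smul_mem _ _ (hsig 3))

lemma bb_orth (c : ℂ) (hc : c ≠ 0) (i j : Fin 4) :
    gdef c (bb c i) (bb c j) = if i = j then (if i = 0 then 1 else -1) else 0 := by
  have habs : (0:ℝ) < ‖c‖ := by simpa using hc
  have key : (((Real.sqrt 2 : ℝ) : ℂ))⁻¹^2 * (((‖c‖ : ℝ)) : ℂ)⁻¹^2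
      * (c * (starRingEnd ℂ) c) * 2 = 1 := by
    rw [Complex.mul_conj]
    norm_cast
    rw [← Complex.sq_norm]
    field_simp
    nlinarith [Real.sq_sqrt (show (0:ℝ) ≤ 2 by norm_num), habs]
  fin_cases i <;> fin_cases j <;>
    simp [gdef, bb, sig, Matrix.trace_fin_two, Matrix.mul_apply,
      Fin.sum_univ_two, Matrix.smul_apply, Complex.real_smul, Complex.star_def,
      Complex.I_sq, mul_inv, Complex.ofReal_mul, Complex.ofReal_inv,
      Complex.I_mul_I] <;>
    (try ring_nf) <;> (try simp only [Complex.I_sq]) <;>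
    first
      | linear_combination key
      | linear_combination -key

/- STATEMENT 1: for any nonzero ε ∈ Λ²U*, the real space H of Hermitian tensors
is 4-dimensional and the symmetric real-bilinear form g characterized by
g(u⊗ū, v⊗v̄) = ε(u,v)·conj(ε)(ū,v̄) is well defined (it exists, is real and
symmetric on H, and is uniquely determined on H) and is Lorentzian of
signature (1,3). -/
theorem hermitian_space_lorentz_metric (c : ℂ) (hc : c ≠ 0) :
    ∃ g : M2 → M2 → ℂ,
      -- real bilinearity
      (∀ M N P : M2, g (M + N) P = g M P + g N P) ∧
      (∀ M N P : M2, g M (N + P) = g M N + g M P) ∧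
      (∀ (t : ℝ) (M N : M2), g (t • M) N = t • g M N) ∧
      (∀ (t : ℝ) (M N : M2), g M (t • N) = t • g M N) ∧
      -- the characterizing property on decomposable Hermitian tensors
      (∀ u v : U2, g (outerH u) (outerH v) = epsBil c u v * star (epsBil c u v)) ∧
      -- g is symmetric and real-valued on Hermitian elements
      (∀ M N : M2, IsHerm M → IsHerm N → g M N = g N M ∧ star (g M N) = g M N) ∧
      -- well-definedness: any real-bilinear form with the same characterizing
      -- values agrees with g on Hermitian elements
      (∀ g' : M2 → M2 → ℂ,
        (∀ M N P : M2, g' (M + N) P = g' M P + g' N P) →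
        (∀ M N P : M2, g' M (N + P) = g' M N + g' M P) →
        (∀ (t : ℝ) (M N : M2), g' (t • M) N = t • g' M N) →
        (∀ (t : ℝ) (M N : M2), g' M (t • N) = t • g' M N) →
        (∀ u v : U2, g' (outerH u) (outerH v)
            = epsBil c u v * star (epsBil c u v)) →
        ∀ M N : M2, IsHerm M → IsHerm N → g' M N = g M N) ∧
      -- H is 4-dimensional and g has Lorentzian signature (1,3):
      -- there is a basis b of H which is g-orthogonal with signs (+,−,−,−)
      (∃ b : Fin 4 → M2,
        (∀ i, IsHerm (b i)) ∧
        LinearIndependent ℝ b ∧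
        (∀ M : M2, IsHerm M → M ∈ Submodule.span ℝ (Set.range b)) ∧
        (∀ i j, g (b i) (b j) =
          if i = j then (if i = 0 then 1 else -1) else 0)) := by
  have habs : (0:ℝ) < ‖c‖ := by simpa using hc
  refine ⟨gdef c, gdef_add_left c, gdef_add_right c, gdef_smul_left c,
    gdef_smul_right c, gdef_outer c, ?_, ?_, ?_⟩
  · -- symmetry and reality
    intro M N hM hN
    constructor
    · rw [gdef, gdef, Matrix.trace_mul_comm]; ring
    · have h1 : star M.trace = M.trace := by
        conv_rhs => rw [← hM]
        rw [Matrix.trace_conjTranspose]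
      have h2 : star N.trace = N.trace := by
        conv_rhs => rw [← hN]
        rw [Matrix.trace_conjTranspose]
      have h3 : star (M * N).trace = (M * N).trace := by
        rw [← Matrix.trace_conjTranspose, Matrix.conjTranspose_mul]
        conv_rhs => rw [← hM, ← hN]
        exact Matrix.trace_mul_comm _ _
      simp only [gdef, star_mul', star_sub, star_star, h1, h2, h3]
      ring
  · -- uniqueness
    intro g' ha hb hs1 hs2 hval M N hM hN
    have step1 : ∀ u (N : M2), IsHerm N →
        g' (outerH u) N = gdef c (outerH u) N := by
      intro u N hN
      obtain ⟨a, b, x, y, hNd⟩ := herm_decomp N hN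
      rw [hNd]
      simp only [hb, hs2, gdef_add_right, gdef_smul_right, hval, gdef_outer]
    obtain ⟨a, b, x, y, hMd⟩ := herm_decomp M hM
    rw [hMd]
    simp only [ha, hs1, gdef_add_left, gdef_smul_left,
      step1 ![1,0] N hN, step1 ![0,1] N hN, step1 ![1,1] N hN,
      step1 ![1,Complex.I] N hN]
  · exact ⟨bb c, bb_herm c, bb_indep c hc, bb_span c hc, bb_orth c hc⟩
end
end

section
/- An element Y of H = H(U⊗conj(U)) is isotropic for the Lorentzian metric g (i.e. g(Y,Y)=0) if and only if Y = ±u⊗conj(u) for some u ∈ U. -/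
open Matrix

noncomputable section

lemma exists_outer (aR dR : ℝ) (b : ℂ) (Y : M2)
    (hA : Y 0 0 = (aR:ℂ)) (hD : Y 1 1 = (dR:ℂ)) (hB : Y 0 1 = b) (hC : Y 1 0 = star b)
    (hdet : aR * dR = Complex.normSq b) :
    ∃ u : U2, Y = outerH u ∨ Y = -outerH u := by
  have hsbb : star b * b = ((Complex.normSq b : ℝ) : ℂ) := by
    rw [Complex.star_def, mul_comm, Complex.mul_conj]
  rcases lt_trichotomy aR 0 with hlt | heq | hgt
  · -- aR < 0
    set s : ℝ := Real.sqrt (-aR) with hs_def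
    have hs : (s:ℂ) * (s:ℂ) = ((-aR : ℝ) : ℂ) := by
      rw [← Complex.ofReal_mul, Real.mul_self_sqrt (by linarith)]
    have hsne : (s:ℂ) ≠ 0 := by
      exact_mod_cast (Real.sqrt_ne_zero'.mpr (by linarith) : s ≠ 0)
    refine ⟨![(s:ℂ), -(star b) / s], Or.inr ?_⟩
    ext A B
    fin_cases A <;> fin_cases B <;>
      simp only [outerH, Matrix.neg_apply, Matrix.cons_val_zero, Matrix.cons_val_one,
        Matrix.head_cons, Fin.zero_eta, Fin.mk_one, hA, hB, hC, hD, star_div₀, star_neg,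
        star_star, Complex.star_def, Complex.conj_ofReal]
    · rw [hs]; push_cast; ring
    · field_simp; rw [Complex.conj_conj]
    · field_simp
    · rw [Complex.conj_conj]
      have hmc : (starRingEnd ℂ) b * b = ((aR * dR : ℝ):ℂ) := by
        rw [mul_comm, Complex.mul_conj, hdet]
      have haC : ((aR:ℂ)) ≠ 0 := by exact_mod_cast hlt.ne
      have hs2 : (s:ℂ)^2 = -(aR:ℂ) := by rw [sq, hs]; push_cast; ring
      push_cast at hmc ⊢
      field_simp
      rw [hs2]
      push_cast
      linear_combination hmc
  · -- aR = 0
    have hb0 : b = 0 := by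
      have : Complex.normSq b = 0 := by rw [← hdet, heq]; ring
      exact Complex.normSq_eq_zero.mp this
    rcases le_or_gt 0 dR with hge | hlt2
    · refine ⟨![0, Real.sqrt dR], Or.inl ?_⟩
      ext A B
      fin_cases A <;> fin_cases B <;>
        simp [outerH, hA, hB, hC, hD, hb0, heq, Complex.conj_ofReal]
      rw [← Complex.ofReal_mul, Real.mul_self_sqrt hge]
    · refine ⟨![0, Real.sqrt (-dR)], Or.inr ?_⟩
      ext A B
      fin_cases A <;> fin_cases B <;>
        simp [outerH, hA, hB, hC, hD, hb0, heq, Complex.conj_ofReal]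
      rw [← Complex.ofReal_mul, Real.mul_self_sqrt (by linarith)]
      push_cast; ring
  · -- aR > 0
    set s : ℝ := Real.sqrt aR with hs_def
    have hs : (s:ℂ) * (s:ℂ) = ((aR : ℝ) : ℂ) := by
      rw [← Complex.ofReal_mul, Real.mul_self_sqrt hgt.le]
    have hsne : (s:ℂ) ≠ 0 := by
      exact_mod_cast (Real.sqrt_ne_zero'.mpr hgt : s ≠ 0)
    refine ⟨![(s:ℂ), (star b) / s], Or.inl ?_⟩
    ext A B
    fin_cases A <;> fin_cases B <;>
      simp only [outerH, Matrix.cons_val_zero, Matrix.cons_val_one,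
        Matrix.head_cons, Fin.zero_eta, Fin.mk_one, hA, hB, hC, hD, star_div₀,
        star_star, Complex.star_def, Complex.conj_ofReal]
    · rw [hs]
    · field_simp; rw [Complex.conj_conj]
    · field_simp
    · rw [Complex.conj_conj]
      have hmc : (starRingEnd ℂ) b * b = ((aR * dR : ℝ):ℂ) := by
        rw [mul_comm, Complex.mul_conj, hdet]
      have haC : ((aR:ℂ)) ≠ 0 := by exact_mod_cast hgt.ne'
      have hs2 : (s:ℂ)^2 = (aR:ℂ) := by rw [sq, hs]
      push_cast at hmc ⊢
      field_simp
      rw [hs2]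
      -- push_cast (noop)
      linear_combination -hmc

/- STATEMENT 3: an element Y of H = H(U⊗conj(U)) is isotropic for the
Lorentzian metric g (i.e. g(Y,Y) = 0) if and only if Y = ±u⊗conj(u) for
some u ∈ U.  Here g is the real-bilinear form characterized by
g(u⊗ū, v⊗v̄) = ε(u,v)·conj(ε(u,v)). -/
theorem isotropic_iff_decomposable (c : ℂ) (hc : c ≠ 0) (g : M2 → M2 → ℂ)
    (hg1 : ∀ M N P : M2, g (M + N) P = g M P + g N P)
    (hg2 : ∀ M N P : M2, g M (N + P) = g M N + g M P)
    (hg3 : ∀ (t : ℝ) (M N : M2), g (t • M) N = t • g M N)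
    (hg4 : ∀ (t : ℝ) (M N : M2), g M (t • N) = t • g M N)
    (hg : ∀ u v : U2, g (outerH u) (outerH v)
        = epsBil c u v * star (epsBil c u v)) :
    ∀ Y : M2, IsHerm Y →
      (g Y Y = 0 ↔ ∃ u : U2, Y = outerH u ∨ Y = -outerH u) := by
  intro Y hY
  have hself : ∀ u : U2, g (outerH u) (outerH u) = 0 := by
    intro u
    have h0 : epsBil c u u = 0 := by simp [epsBil, mul_comm]
    rw [hg, h0]; simp
  constructor
  · intro hzero
    -- Hermitian structure
    have h00 : (starRingEnd ℂ) (Y 0 0) = Y 0 0 := by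
      have := congrFun (congrFun hY 0) 0
      simpa [Matrix.conjTranspose_apply] using this
    have h11 : (starRingEnd ℂ) (Y 1 1) = Y 1 1 := by
      have := congrFun (congrFun hY 1) 1
      simpa [Matrix.conjTranspose_apply] using this
    have h10 : Y 1 0 = (starRingEnd ℂ) (Y 0 1) := by
      have := congrFun (congrFun hY 1) 0
      simpa [Matrix.conjTranspose_apply] using this.symm
    set a : ℝ := (Y 0 0).re with ha_def
    set d : ℝ := (Y 1 1).re with hd_def
    set b : ℂ := Y 0 1 with hb_def
    have ha : Y 0 0 = (a : ℂ) := (Complex.conj_eq_iff_re.mp h00).symm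
    have hd : Y 1 1 = (d : ℂ) := (Complex.conj_eq_iff_re.mp h11).symm
    set x2 : ℝ := b.re with hx2
    set x3 : ℝ := b.im with hx3
    set x0 : ℝ := a - x2 - x3 with hx0
    set x1 : ℝ := d - x2 - x3 with hx1
    have hdecomp : Y = x0 • outerH ![1,0] + x1 • outerH ![0,1]
        + x2 • outerH ![1,1] + x3 • outerH ![1,-Complex.I] := by
      ext A B
      fin_cases A <;> fin_cases B <;>
        simp [outerH, Matrix.add_apply, Matrix.smul_apply, Complex.ext_iff,
          hx0, hx1] <;>
        simp [ha, hd, h10, hb_def, hx2, hx3] <;> ring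
    -- the sixteen basic values
    have g00 : g (outerH ![1,0]) (outerH ![1,0]) = 0 := hself _
    have g11 : g (outerH ![0,1]) (outerH ![0,1]) = 0 := hself _
    have g22 : g (outerH ![1,1]) (outerH ![1,1]) = 0 := hself _
    have g33 : g (outerH ![1,-Complex.I]) (outerH ![1,-Complex.I]) = 0 := hself _
    have g01 : g (outerH ![1,0]) (outerH ![0,1]) = c * star c := by
      rw [hg]; simp [epsBil]
    have g10 : g (outerH ![0,1]) (outerH ![1,0]) = c * star c := by
      rw [hg]; simp [epsBil]
    have g02 : g (outerH ![1,0]) (outerH ![1,1]) = c * star c := by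
      rw [hg]; simp [epsBil]
    have g20 : g (outerH ![1,1]) (outerH ![1,0]) = c * star c := by
      rw [hg]; simp [epsBil]
    have g03 : g (outerH ![1,0]) (outerH ![1,-Complex.I]) = c * star c := by
      rw [hg]; simp [epsBil, Complex.star_def, _root_.map_mul]; ring_nf
      simp [Complex.I_sq]
    have g30 : g (outerH ![1,-Complex.I]) (outerH ![1,0]) = c * star c := by
      rw [hg]; simp [epsBil, Complex.star_def, _root_.map_mul]; ring_nf
      simp [Complex.I_sq]
    have g12 : g (outerH ![0,1]) (outerH ![1,1]) = c * star c := by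
      rw [hg]; simp [epsBil]
    have g21 : g (outerH ![1,1]) (outerH ![0,1]) = c * star c := by
      rw [hg]; simp [epsBil]
    have g13 : g (outerH ![0,1]) (outerH ![1,-Complex.I]) = c * star c := by
      rw [hg]; simp [epsBil, Complex.star_def, _root_.map_mul]
    have g31 : g (outerH ![1,-Complex.I]) (outerH ![0,1]) = c * star c := by
      rw [hg]; simp [epsBil, Complex.star_def, _root_.map_mul]
    have g23 : g (outerH ![1,1]) (outerH ![1,-Complex.I]) = 2 * (c * star c) := by
      rw [hg]; simp [epsBil, Complex.star_def, _root_.map_mul, map_sub]; ring_nf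
      simp [Complex.I_sq]; ring
    have g32 : g (outerH ![1,-Complex.I]) (outerH ![1,1]) = 2 * (c * star c) := by
      rw [hg]; simp [epsBil, Complex.star_def, _root_.map_mul, map_sub]; ring_nf
      simp [Complex.I_sq]; ring
    have hgYY : g Y Y = (c * star c) *
        (2 * ((x0:ℂ)*x1 + x0*x2 + x0*x3 + x1*x2 + x1*x3 + 2*(x2*x3))) := by
      rw [hdecomp]
      simp only [hg1, hg2, hg3, hg4, g00, g11, g22, g33, g01, g10, g02, g20,
        g03, g30, g12, g21, g13, g31, g23, g32, Complex.real_smul]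
      ring
    rw [hgYY] at hzero
    have hcc : c * star c ≠ 0 := mul_ne_zero hc (star_ne_zero.mpr hc)
    have hre : x0*x1 + x0*x2 + x0*x3 + x1*x2 + x1*x3 + 2*(x2*x3) = 0 := by
      have h2 : ((2 * ((x0:ℂ)*x1 + x0*x2 + x0*x3 + x1*x2 + x1*x3 + 2*(x2*x3))) : ℂ) = 0 :=
        (mul_eq_zero.mp hzero).resolve_left hcc
      have : ((2*(x0*x1 + x0*x2 + x0*x3 + x1*x2 + x1*x3 + 2*(x2*x3)) : ℝ) : ℂ) = 0 := by
        push_cast; convert h2 using 1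
      have := Complex.ofReal_eq_zero.mp this
      linarith
    have hdet : a * d = x2^2 + x3^2 := by
      have : x0*x1 + x0*x2 + x0*x3 + x1*x2 + x1*x3 + 2*(x2*x3)
          = a*d - x2^2 - x3^2 := by rw [hx0, hx1]; ring
      linarith [this ▸ hre]
    have hdet' : a * d = Complex.normSq b := by
      rw [Complex.normSq_apply, ← hx2, ← hx3]
      linear_combination hdet
    exact exists_outer a d b Y ha hd hb_def.symm h10 hdet'
  · rintro ⟨u, rfl | rfl⟩
    · exact hself u
    · have hneg : -outerH u = ((-1 : ℝ)) • outerH u := by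
        ext A B; simp
      rw [hneg, hg3, hg4, hself u]; simp
end
end
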